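/- arXiv:2502.18908 — 2 statements merged into one kernel-verified Lean document; each statement's English description precedes it below -/
import Mathlib

section
/- Let H be a real Hilbert space and Q a measure on H such that every finite-dimensional affine subspace of H is Q-null. Then for every k ≥ 1, every finite-dimensional affine subspace A of H^k satisfies Q^{⊗k}(A) = 0. -/
open MeasureTheory
open scoped RealInnerProductSpace

/-- Membership in a finite-dimensional subspace of a real inner product space is
characterized by a Parseval-type identity. -/
private lemma mem_iff_norm_sq_eq_sum {F : Type*} [NormedAddCommGroup F] [InnerProductSpace ℝ F]
    (V : Submodule ℝ F) [FiniteDimensional ℝ V] (x : F) :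
    x ∈ V ↔ ‖x‖ ^ 2 = ∑ j, ⟪x, ((stdOrthonormalBasis ℝ V) j : F)⟫ ^ 2 := by
  set b := stdOrthonormalBasis ℝ V with hb
  have hsum : ‖(V.orthogonalProjectionOnto x : F)‖ ^ 2 = ∑ j, ⟪x, (b j : F)⟫ ^ 2 := by
    calc ‖(V.orthogonalProjectionOnto x : F)‖ ^ 2
        = ‖b.repr (V.orthogonalProjectionOnto x)‖ ^ 2 := by
          rw [b.repr.norm_map, Submodule.coe_norm]
      _ = ∑ j, ‖b.repr (V.orthogonalProjectionOnto x) j‖ ^ 2 := PiLp.norm_sq_eq_of_L2 _ _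
      _ = ∑ j, ⟪x, (b j : F)⟫ ^ 2 := by
          refine Finset.sum_congr rfl fun j _ => ?_
          rw [b.repr_apply_apply, Submodule.inner_orthogonalProjectionOnto_eq_of_mem_left,
            Real.norm_eq_abs, sq_abs, real_inner_comm]
  have horth : ⟪(V.orthogonalProjectionOnto x : F), x - (V.orthogonalProjectionOnto x : F)⟫ = 0 :=
    (Submodule.mem_orthogonal V _).1 (V.sub_starProjection_mem_orthogonal x) _
      (Submodule.coe_mem _)
  have hpyth : ‖x‖ ^ 2
      = ‖(V.orthogonalProjectionOnto x : F)‖ ^ 2 + ‖x - (V.orthogonalProjectionOnto x : F)‖ ^ 2 := by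
    have h := norm_add_sq_real (V.orthogonalProjectionOnto x : F) (x - (V.orthogonalProjectionOnto x : F))
    rw [horth] at h
    have h2 : (V.orthogonalProjectionOnto x : F) + (x - (V.orthogonalProjectionOnto x : F)) = x := by abel
    rw [h2] at h
    linarith
  constructor
  · intro hx
    have hPx : (V.orthogonalProjectionOnto x : F) = x := V.starProjection_eq_self_iff.2 hx
    rw [← hsum, hPx]
  · intro h
    have h3 : ‖x - (V.orthogonalProjectionOnto x : F)‖ ^ 2 = 0 := by
      rw [hsum] at hpyth; linarith
    have h4 : x = (V.orthogonalProjectionOnto x : F) := by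
      have h5 := (pow_eq_zero_iff (n := 2) (by norm_num)).1 h3
      rw [norm_eq_zero, sub_eq_zero] at h5
      exact h5
    rw [h4]
    exact Submodule.coe_mem _

/-- A finite-dimensional affine subspace of a finite power of a Borel inner product space
is measurable for the product σ-algebra. -/
private lemma measurableSet_fd_affine {ι : Type*} [Fintype ι]
    {H : Type*} [NormedAddCommGroup H] [InnerProductSpace ℝ H]
    [MeasurableSpace H] [BorelSpace H]
    (A : AffineSubspace ℝ (ι → H)) (hA : FiniteDimensional ℝ A.direction) :
    MeasurableSet (A : Set (ι → H)) := by
  rcases (A : Set (ι → H)).eq_empty_or_nonempty with h | ⟨p, hp⟩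
  · rw [h]; exact MeasurableSet.empty
  · haveI := hA
    let e : (ι → H) ≃ₗ[ℝ] PiLp 2 (fun _ : ι => H) :=
      (WithLp.linearEquiv 2 ℝ (∀ _ : ι, H)).symm
    let V : Submodule ℝ (PiLp 2 (fun _ : ι => H)) :=
      A.direction.map (e : (ι → H) →ₗ[ℝ] PiLp 2 (fun _ : ι => H))
    haveI : FiniteDimensional ℝ V := inferInstance
    set b := stdOrthonormalBasis ℝ V with hb
    have key : (A : Set (ι → H)) = {x : ι → H |
        (∑ i, ‖x i - p i‖ ^ 2)
          = ∑ j, (∑ i, ⟪x i - p i, (b j : PiLp 2 (fun _ : ι => H)) i⟫) ^ 2} := by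
      ext x
      have h1 : x ∈ (A : Set (ι → H)) ↔ x - p ∈ A.direction := by
        rw [SetLike.mem_coe, ← AffineSubspace.vsub_right_mem_direction_iff_mem hp x]
        rfl
      have h2 : x - p ∈ A.direction ↔ e (x - p) ∈ V := by
        constructor
        · intro h; exact Submodule.mem_map_of_mem h
        · intro h
          rcases Submodule.mem_map.1 h with ⟨z, hz, hze⟩
          have hz2 : z = x - p := e.injective (by simpa using hze)
          rwa [← hz2]
      rw [Set.mem_setOf_eq, h1, h2, mem_iff_norm_sq_eq_sum V (e (x - p)),
        PiLp.norm_sq_eq_of_L2]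
      simp_rw [PiLp.inner_apply]
      exact Iff.rfl
    rw [key]
    have mf : Measurable fun x : ι → H => ∑ i, ‖x i - p i‖ ^ 2 :=
      Finset.measurable_sum _ fun i _ =>
        (((continuous_id.sub continuous_const).norm.pow 2).measurable).comp (measurable_pi_apply i)
    have mg : Measurable fun x : ι → H =>
        ∑ j, (∑ i, ⟪x i - p i, (b j : PiLp 2 (fun _ : ι => H)) i⟫) ^ 2 :=
      Finset.measurable_sum _ fun j _ =>
        (Finset.measurable_sum _ fun i _ =>
          ((Continuous.inner (continuous_id.sub continuous_const)
            continuous_const).measurable).comp (measurable_pi_apply i)).pow_const 2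
    exact measurableSet_eq_fun mf mg

/-- The preimage of an affine subspace with finite-dimensional direction under an affine map
with injective linear part has finite-dimensional direction. -/
private lemma fd_comap {V₁ V₂ : Type*} [AddCommGroup V₁] [Module ℝ V₁]
    [AddCommGroup V₂] [Module ℝ V₂]
    (f : V₁ →ᵃ[ℝ] V₂) (hf : Function.Injective f.linear)
    (A : AffineSubspace ℝ V₂) (hA : FiniteDimensional ℝ A.direction) :
    FiniteDimensional ℝ (A.comap f).direction := by
  rcases ((A.comap f : Set V₁)).eq_empty_or_nonempty with h | hn
  · have hbot : A.comap f = ⊥ := (AffineSubspace.coe_eq_bot_iff _).1 h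
    rw [hbot, AffineSubspace.direction_bot]
    infer_instance
  · have hle : (A.comap f).direction ≤ (A.direction).comap f.linear := by
      intro v hv
      rw [AffineSubspace.mem_direction_iff_eq_vsub hn] at hv
      obtain ⟨p1, h1, p2, h2, rfl⟩ := hv
      refine Submodule.mem_comap.2 ?_
      rw [AffineMap.linearMap_vsub f p1 p2]
      exact AffineSubspace.vsub_mem_direction (AffineSubspace.mem_comap.1 h1)
        (AffineSubspace.mem_comap.1 h2)
    haveI := hA
    haveI : FiniteDimensional ℝ ((A.direction).comap f.linear) :=
      FiniteDimensional.of_injective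
        (f.linear.restrict fun x hx => Submodule.mem_comap.1 hx)
        (fun a c h => Subtype.ext (hf (Subtype.ext_iff.1 h)))
    exact Submodule.finiteDimensional_of_le hle

/-- Prepending `0` to a tuple, as a linear map. -/
private def consLinear (M : Type*) [AddCommGroup M] [Module ℝ M] (n : ℕ) :
    (Fin n → M) →ₗ[ℝ] (Fin (n + 1) → M) where
  toFun y := Fin.cons 0 y
  map_add' a c := funext fun i => Fin.cases (by simp) (fun j => by simp) i
  map_smul' r a := funext fun i => Fin.cases (by simp) (fun j => by simp) i

/-- Prepending a fixed element to a tuple, as an affine map. -/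
private def consAffine {M : Type*} [AddCommGroup M] [Module ℝ M] {n : ℕ} (x : M) :
    (Fin n → M) →ᵃ[ℝ] (Fin (n + 1) → M) where
  toFun y := Fin.cons x y
  linear := consLinear M n
  map_vadd' y v := funext fun i => Fin.cases (by simp [consLinear]) (fun j => by simp [consLinear]) i

private lemma aux {H : Type*} [NormedAddCommGroup H] [InnerProductSpace ℝ H] [CompleteSpace H]
    [MeasurableSpace H] [BorelSpace H]
    (Q : Measure H) [SigmaFinite Q]
    (hQ : ∀ A : AffineSubspace ℝ H, FiniteDimensional ℝ A.direction → Q (A : Set H) = 0) :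
    ∀ k : ℕ, ∀ A : AffineSubspace ℝ (Fin (k + 1) → H), FiniteDimensional ℝ A.direction →
      (Measure.pi fun _ : Fin (k + 1) => Q) (A : Set (Fin (k + 1) → H)) = 0 := by
  intro k
  induction k with
  | zero =>
    intro A hA
    let c : H →ᵃ[ℝ] (Fin 1 → H) := (LinearMap.pi fun _ : Fin 1 => LinearMap.id).toAffineMap
    have hcl : Function.Injective c.linear := fun a b h => congrFun h 0
    have hB : FiniteDimensional ℝ (A.comap c).direction := fd_comap c hcl A hA
    haveI := hB
    have hBm : MeasurableSet (A.comap c : Set H) :=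
      (AffineSubspace.closed_of_finiteDimensional (A.comap c)).measurableSet
    have mp := measurePreserving_funUnique Q (Fin 1)
    have hpre : (MeasurableEquiv.funUnique (Fin 1) H) ⁻¹' (A.comap c : Set H)
        = (A : Set (Fin 1 → H)) := by
      ext x
      simp only [Set.mem_preimage, AffineSubspace.coe_comap, SetLike.mem_coe]
      have hx : c (MeasurableEquiv.funUnique (Fin 1) H x) = x := by
        funext i
        have : i = 0 := Subsingleton.elim _ _
        rw [this]; rfl
      rw [hx]
    calc (Measure.pi fun _ : Fin 1 => Q) (A : Set (Fin 1 → H))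
        = Q (A.comap c : Set H) := by
          rw [← hpre]; exact mp.measure_preimage hBm.nullMeasurableSet
      _ = 0 := hQ _ hB
  | succ k ih =>
    intro A hA
    set e := MeasurableEquiv.piFinSuccAbove (fun _ : Fin (k + 1 + 1) => H) 0 with he
    have mp := measurePreserving_piFinSuccAbove (fun _ : Fin (k + 1 + 1) => Q) 0
    have hAm : MeasurableSet (A : Set (Fin (k + 1 + 1) → H)) := measurableSet_fd_affine A hA
    have hsm : MeasurableSet (e.symm ⁻¹' (A : Set (Fin (k + 1 + 1) → H))) :=
      e.symm.measurable hAm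
    have h1 : (Measure.pi fun _ : Fin (k + 1 + 1) => Q) (A : Set (Fin (k + 1 + 1) → H))
        = (Q.prod (Measure.pi fun _ : Fin (k + 1) => Q))
            (e.symm ⁻¹' (A : Set (Fin (k + 1 + 1) → H))) := by
      rw [← mp.measure_preimage hsm.nullMeasurableSet]
      congr 1
      ext x
      simp [he]
    rw [h1, Measure.measure_prod_null hsm]
    refine Filter.Eventually.of_forall fun x => ?_
    show (Measure.pi fun _ : Fin (k + 1) => Q)
      (Prod.mk x ⁻¹' (⇑e.symm ⁻¹' (A : Set (Fin (k + 1 + 1) → H)))) = 0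
    have hcons : Function.Injective (consAffine (n := k + 1) x).linear := by
      intro a c h
      funext j
      simpa [consAffine, consLinear] using congrFun h j.succ
    have hslice : (Prod.mk x ⁻¹' (e.symm ⁻¹' (A : Set (Fin (k + 1 + 1) → H))))
        = ((A.comap (consAffine x) : AffineSubspace ℝ (Fin (k + 1) → H))
            : Set (Fin (k + 1) → H)) := by
      ext y
      simp only [Set.mem_preimage, AffineSubspace.coe_comap, SetLike.mem_coe]
      have hsymm : e.symm (x, y) = Fin.cons x y := by
        simp only [he, MeasurableEquiv.piFinSuccAbove, MeasurableEquiv.symm_mk,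
          MeasurableEquiv.coe_mk, Equiv.symm_symm, Fin.insertNthEquiv_zero]
        rfl
      rw [hsymm]
      rfl
    rw [hslice]
    exact ih (A.comap (consAffine x)) (fd_comap _ hcons A hA)

theorem fd_affine_subspace_null_in_power
    {H : Type*} [NormedAddCommGroup H] [InnerProductSpace ℝ H] [CompleteSpace H]
    [MeasurableSpace H] [BorelSpace H]
    (Q : Measure H) [SigmaFinite Q]
    (hQ : ∀ A : AffineSubspace ℝ H, FiniteDimensional ℝ A.direction → Q (A : Set H) = 0)
    (k : ℕ) (hk : 1 ≤ k)
    (A : AffineSubspace ℝ (Fin k → H)) (hA : FiniteDimensional ℝ A.direction) :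
    (Measure.pi fun _ : Fin k => Q) (A : Set (Fin k → H)) = 0 := by
  obtain ⟨m, rfl⟩ : ∃ m, k = m + 1 := ⟨k - 1, (Nat.succ_pred_eq_of_pos hk).symm⟩
  exact aux Q hQ m A hA
end

section
/- Let H be a real Hilbert space and Q a probability measure on H such that every proper (strict) affine subspace of H is Q-null. Then for every k ≥ 1, every proper affine subspace A of H^k satisfies Q^{⊗k}(A) = 0. -/
open MeasureTheory

section Aux

variable {E : Type*} [AddCommGroup E] [Module ℝ E]

/-- The level set of a linear functional, as an affine subspace. -/
def linearLevelSet (ψ : E →ₗ[ℝ] ℝ) (r : ℝ) : AffineSubspace ℝ E where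
  carrier := {x | ψ x = r}
  smul_vsub_vadd_mem' := by
    intro t p₁ p₂ p₃ h₁ h₂ h₃
    simp only [Set.mem_setOf_eq] at *
    simp [vsub_eq_sub, vadd_eq_add, map_add, LinearMap.map_smul, map_sub, h₁, h₂, h₃]

lemma linearLevelSet_ne_top (ψ : E →ₗ[ℝ] ℝ) {u : E} (hu : ψ u ≠ 0) (r : ℝ) :
    linearLevelSet ψ r ≠ ⊤ := by
  intro h
  have hx : ((r + 1) / ψ u) • u ∈ linearLevelSet ψ r := by
    rw [h]; exact AffineSubspace.mem_top _ _ _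
  have h2 : ψ (((r + 1) / ψ u) • u) = r := hx
  rw [LinearMap.map_smul, smul_eq_mul, div_mul_cancel₀ _ hu] at h2
  linarith

lemma level_null {mE : MeasurableSpace E} (Q : Measure E)
    (hQ : ∀ A : AffineSubspace ℝ E, A ≠ ⊤ → Q (A : Set E) = 0)
    (ψ : E →ₗ[ℝ] ℝ) {u : E} (hu : ψ u ≠ 0) (r : ℝ) :
    Q {x | ψ x = r} = 0 :=
  hQ _ (linearLevelSet_ne_top ψ hu r)

/-- A probability measure vanishing on all proper affine subspaces forces finite
dimensionality. -/
lemma finiteDimensional_of_null_affine {H : Type*} [AddCommGroup H] [Module ℝ H]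
    {mH : MeasurableSpace H} (Q : Measure H) [IsProbabilityMeasure Q]
    (hQ : ∀ A : AffineSubspace ℝ H, A ≠ ⊤ → Q (A : Set H) = 0) :
    FiniteDimensional ℝ H := by
  by_contra hinf
  set b := Module.Free.chooseBasis ℝ H with hb
  have hι : Infinite (Module.Free.ChooseBasisIndex ℝ H) := by
    rw [← not_finite_iff_infinite]
    intro h
    exact hinf (Module.Finite.of_basis b)
  set f := Infinite.natEmbedding (Module.Free.ChooseBasisIndex ℝ H) with hf
  have hn : ∀ n, Q {x | b.coord (f n) x = 0} = 0 := by
    intro n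
    refine level_null Q hQ _ (u := b (f n)) ?_ 0
    simp [Module.Basis.coord_apply, Module.Basis.repr_self]
  have hcover : (Set.univ : Set H) ⊆ ⋃ n, {x | b.coord (f n) x = 0} := by
    intro x _
    have hex : ∃ n, f n ∉ (b.repr x).support := by
      by_contra hall
      push_neg at hall
      exact ((b.repr x).support.finite_toSet.subset
        (Set.range_subset_iff.mpr hall)).not_infinite
        (Set.infinite_range_of_injective f.injective)
    obtain ⟨n, hn'⟩ := hex
    refine Set.mem_iUnion.mpr ⟨n, ?_⟩
    simpa [Module.Basis.coord_apply, Finsupp.mem_support_iff, not_not] using hn'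
  have h0 : Q Set.univ = 0 := measure_mono_null hcover (measure_iUnion_null hn)
  simp [measure_univ] at h0

end Aux

theorem proper_affine_subspace_null_in_power
    {H : Type*} [NormedAddCommGroup H] [InnerProductSpace ℝ H] [CompleteSpace H]
    [MeasurableSpace H] [BorelSpace H]
    (Q : Measure H) [IsProbabilityMeasure Q]
    (hQ : ∀ A : AffineSubspace ℝ H, A ≠ ⊤ → Q (A : Set H) = 0)
    (k : ℕ) (hk : 1 ≤ k)
    (A : AffineSubspace ℝ (Fin k → H)) (hA : A ≠ ⊤) :
    (Measure.pi fun _ : Fin k => Q) (A : Set (Fin k → H)) = 0 := by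
  classical
  have hfin : FiniteDimensional ℝ H := finiteDimensional_of_null_affine Q hQ
  rcases (A : Set (Fin k → H)).eq_empty_or_nonempty with hA0 | ⟨a, ha⟩
  · rw [hA0]; exact measure_empty
  obtain ⟨n, rfl⟩ : ∃ n, k = n + 1 := ⟨k - 1, (Nat.succ_pred_eq_of_pos hk).symm⟩
  have ha' : a ∈ A := ha
  -- the direction of `A` is a proper submodule
  have hVtop : A.direction ≠ ⊤ := by
    intro h
    apply hA
    rw [AffineSubspace.ext_iff]
    apply Set.eq_univ_of_forall
    intro z
    have : (z - a) +ᵥ a ∈ A := by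
      refine A.vadd_mem_of_mem_direction ?_ ha'
      rw [h]; trivial
    simpa using this
  -- a nonzero functional vanishing on the direction
  haveI : Nontrivial ((Fin (n + 1) → H) ⧸ A.direction) :=
    Submodule.Quotient.nontrivial_iff.mpr hVtop
  set bQ := Module.Free.chooseBasis ℝ ((Fin (n + 1) → H) ⧸ A.direction) with hbQ
  obtain ⟨i⟩ := bQ.index_nonempty
  set Φ : (Fin (n + 1) → H) →ₗ[ℝ] ℝ := (bQ.coord i).comp A.direction.mkQ with hΦ
  obtain ⟨w, hw⟩ := A.direction.mkQ_surjective (bQ i)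
  have hΦw : Φ w = 1 := by
    simp [hΦ, hw, Module.Basis.coord_apply, Module.Basis.repr_self]
  -- component functionals
  set ψ : Fin (n + 1) → (H →ₗ[ℝ] ℝ) :=
    fun i' => Φ.comp (LinearMap.single ℝ (fun _ : Fin (n + 1) => H) i') with hψ
  have hsum : ∀ z : Fin (n + 1) → H, Φ z = ∑ i', ψ i' (z i') := by
    intro z
    have hz0 : (∑ i', Pi.single i' (z i')) = z := Finset.univ_sum_single z
    calc Φ z = Φ (∑ i', Pi.single i' (z i')) := by rw [hz0]
    _ = ∑ i', Φ (Pi.single i' (z i')) := map_sum Φ _ _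
    _ = ∑ i', ψ i' (z i') := rfl
  -- A is contained in a level set of Φ
  set c := Φ a with hc
  set S := (fun z : Fin (n + 1) → H => ∑ i', ψ i' (z i')) ⁻¹' {c} with hSdef
  have hAS : (A : Set (Fin (n + 1) → H)) ⊆ S := by
    intro z hz
    have hzd : z - a ∈ A.direction := by
      simpa [vsub_eq_sub] using AffineSubspace.vsub_mem_direction hz ha'
    have hmk : A.direction.mkQ (z - a) = 0 := by
      rwa [Submodule.mkQ_apply, Submodule.Quotient.mk_eq_zero]
    have hΦza : Φ (z - a) = 0 := by
      simp only [hΦ, LinearMap.comp_apply, hmk, map_zero]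
    have hzc : Φ z = c := by
      have hsub : Φ z - Φ a = 0 := by rw [← map_sub]; exact hΦza
      have := sub_eq_zero.mp hsub
      rw [this, hc]
    simp only [hSdef, Set.mem_preimage, Set.mem_singleton_iff, ← hsum z]
    exact hzc
  refine measure_mono_null hAS ?_
  -- measurability
  have hmeas : Measurable fun z : Fin (n + 1) → H => ∑ i', ψ i' (z i') := by
    refine Finset.measurable_sum _ fun i' _ => ?_
    exact ((ψ i').continuous_of_finiteDimensional.measurable).comp (measurable_pi_apply i')
  have hS : MeasurableSet S := hmeas (measurableSet_singleton c)
  -- a coordinate where the component functional does not vanish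
  obtain ⟨i₀, -, hi₀⟩ : ∃ i₀ ∈ Finset.univ, ψ i₀ (w i₀) ≠ 0 := by
    refine Finset.exists_ne_zero_of_sum_ne_zero ?_
    rw [← hsum w, hΦw]; exact one_ne_zero
  -- peel off coordinate i₀
  set e := MeasurableEquiv.piFinSuccAbove (fun _ : Fin (n + 1) => H) i₀ with he
  have mp := measurePreserving_piFinSuccAbove (fun _ : Fin (n + 1) => Q) i₀
  have hpre : e ⁻¹' (e.symm ⁻¹' S) = S := by
    ext z; simp
  have htransfer : (Measure.pi fun _ : Fin (n + 1) => Q) S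
      = (Q.prod (Measure.pi fun _ : Fin n => Q)) (e.symm ⁻¹' S) := by
    conv_lhs => rw [← hpre]
    exact mp.measure_preimage_equiv (e.symm ⁻¹' S)
  rw [htransfer]
  have hT : MeasurableSet (e.symm ⁻¹' S) := e.symm.measurable hS
  rw [Measure.prod_apply_symm hT]
  have hslice : ∀ y : Fin n → H,
      Q ((fun x => (x, y)) ⁻¹' (e.symm ⁻¹' S)) = 0 := by
    intro y
    have hsymm : ∀ x : H, e.symm (x, y) = i₀.insertNth x y := fun x => by
      rfl
    have hset : ((fun x : H => (x, y)) ⁻¹' (e.symm ⁻¹' S))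
        = {x | ψ i₀ x = c - ∑ j, ψ (i₀.succAbove j) (y j)} := by
      ext x
      simp only [Set.mem_preimage, hSdef, Set.mem_singleton_iff, hsymm x, Set.mem_setOf_eq]
      rw [Fin.sum_univ_succAbove (fun i' => ψ i' (Fin.insertNth (α := fun _ : Fin (n+1) => H) i₀ x y i')) i₀]
      simp only [Fin.insertNth_apply_same, Fin.insertNth_apply_succAbove]
      constructor
      · intro h; linarith
      · intro h; linarith
    rw [hset]
    exact level_null Q hQ (ψ i₀) hi₀ _
  calc ∫⁻ y, Q ((fun x => (x, y)) ⁻¹' (e.symm ⁻¹' S)) ∂(Measure.pi fun _ : Fin n => Q)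
      = ∫⁻ _, 0 ∂(Measure.pi fun _ : Fin n => Q) := lintegral_congr hslice
    _ = 0 := lintegral_zero
end
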